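/- Let R be a commutative integral domain and p, q ∈ R. The 2×2 matrix with first row (p, q) and second row (0, 0) is a product of idempotent 2×2 matrices over R if and only if the matrix with first row (q, p) and second row (0, 0) is a product of idempotent 2×2 matrices over R. -/
import Mathlib

private lemma aux_pq_qp (R : Type*) [CommRing R] (p q : R)
    (h : !![p, q; 0, 0] ∈ Submonoid.closure {E : Matrix (Fin 2) (Fin 2) R | E * E = E}) :
    !![q, p; 0, 0] ∈ Submonoid.closure {E : Matrix (Fin 2) (Fin 2) R | E * E = E} := by
  have hS : (!![(0:R),1;1,0]) * !![(0:R),1;1,0] = 1 := by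
    norm_num [Matrix.mul_fin_two, ← Matrix.one_fin_two]
  have hswapall : ∀ M ∈ Submonoid.closure {E : Matrix (Fin 2) (Fin 2) R | E * E = E},
      !![(0:R),1;1,0] * M * !![(0:R),1;1,0] ∈
      Submonoid.closure {E : Matrix (Fin 2) (Fin 2) R | E * E = E} := by
    intro M hM
    induction hM using Submonoid.closure_induction with
    | mem x hx =>
      apply Submonoid.subset_closure
      simp only [Set.mem_setOf_eq] at hx ⊢
      calc !![(0:R),1;1,0] * x * !![(0:R),1;1,0] * (!![(0:R),1;1,0] * x * !![(0:R),1;1,0])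
          = !![(0:R),1;1,0] * (x * (!![(0:R),1;1,0] * !![(0:R),1;1,0]) * x) * !![(0:R),1;1,0] := by
            noncomm_ring
        _ = !![(0:R),1;1,0] * x * !![(0:R),1;1,0] := by rw [hS, mul_one, hx]
    | one => simpa [hS] using Submonoid.one_mem _
    | mul x y hx hy ihx ihy =>
      have : !![(0:R),1;1,0] * (x * y) * !![(0:R),1;1,0]
          = (!![(0:R),1;1,0] * x * !![(0:R),1;1,0]) * (!![(0:R),1;1,0] * y * !![(0:R),1;1,0]) := by
        rw [show (!![(0:R),1;1,0] * x * !![(0:R),1;1,0]) * (!![(0:R),1;1,0] * y * !![(0:R),1;1,0])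
            = !![(0:R),1;1,0] * x * (!![(0:R),1;1,0] * !![(0:R),1;1,0]) * y * !![(0:R),1;1,0]
            from by noncomm_ring, hS]
        noncomm_ring
      rw [this]
      exact Submonoid.mul_mem _ ihx ihy
  have hswap := hswapall _ h
  have h1 : (!![(1:R),0;0,0]) ∈ Submonoid.closure {E : Matrix (Fin 2) (Fin 2) R | E * E = E} :=
    Submonoid.subset_closure (by ext i j; fin_cases i <;> fin_cases j <;> simp [Matrix.mul_apply, Fin.sum_univ_two])
  have h2 : (!![(0:R),1;0,1]) ∈ Submonoid.closure {E : Matrix (Fin 2) (Fin 2) R | E * E = E} :=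
    Submonoid.subset_closure (by ext i j; fin_cases i <;> fin_cases j <;> simp [Matrix.mul_apply, Fin.sum_univ_two])
  have key : !![q, p; 0, 0] =
      !![(1:R),0;0,0] * (!![(0:R),1;0,1] * (!![(0:R),1;1,0] * !![p, q; 0, 0] * !![(0:R),1;1,0])) := by
    ext i j; fin_cases i <;> fin_cases j <;> simp [Matrix.mul_apply, Fin.sum_univ_two]
  rw [key]
  exact Submonoid.mul_mem _ h1 (Submonoid.mul_mem _ h2 hswap)

/-- Over a commutative integral domain `R`, the matrix `!![p, q; 0, 0]`
is a product of idempotent `2×2` matrices iff `!![q, p; 0, 0]` is. -/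
theorem matrix_pq_prod_idempotents_iff_qp (R : Type*) [CommRing R] [IsDomain R]
    (p q : R) :
    !![p, q; 0, 0] ∈ Submonoid.closure {E : Matrix (Fin 2) (Fin 2) R | E * E = E} ↔
    !![q, p; 0, 0] ∈ Submonoid.closure {E : Matrix (Fin 2) (Fin 2) R | E * E = E} := by
  exact ⟨aux_pq_qp R p q, aux_pq_qp R q p⟩
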